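/- arXiv:1002.0761 — 3 statements merged into one kernel-verified Lean document; each statement's English description precedes it below -/
import Mathlib

section
/- Let f = ∑_{i=0}^9 C(9,i) a_i x^{9−i} y^i be a binary nonic with (f,f)_8 = x². Suppose moreover a_9² = 0, a_8² − a_7 a_9 = 0, 3 a_7² − 4 a_6 a_8 + a_5 a_9 = 0, and 10 a_6² − 15 a_5 a_7 + 6 a_4 a_8 − a_3 a_9 = 0. Then a_5 = a_6 = a_7 = a_8 = a_9 = 0 and f has a root of multiplicity at least 5 (namely x^5 | f). -/
open MvPolynomial

/-- Iterated partial derivative `∂^a/∂x^a ∂^b/∂y^b`. -/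
noncomputable def dxy (a b : ℕ) (g : MvPolynomial (Fin 2) ℂ) : MvPolynomial (Fin 2) ℂ :=
  (⇑(pderiv (0 : Fin 2)))^[a] ((⇑(pderiv (1 : Fin 2)))^[b] g)

/-- The `p`-th transvectant of `g ∈ V_m` and `h ∈ V_n`. -/
noncomputable def transv (m n p : ℕ) (g h : MvPolynomial (Fin 2) ℂ) : MvPolynomial (Fin 2) ℂ :=
  (((m - p).factorial * (n - p).factorial : ℂ) / ((m.factorial : ℂ) * n.factorial)) •
    ∑ i ∈ Finset.range (p + 1),
      ((-1 : ℂ) ^ i * (p.choose i : ℂ)) • (dxy (p - i) i g * dxy i (p - i) h)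

lemma pderiv_X_pow' (j k : Fin 2) (n : ℕ) :
    pderiv j ((X k : MvPolynomial (Fin 2) ℂ) ^ n) = C (n : ℂ) * X k ^ (n - 1) * pderiv j (X k) := by
  rw [pderiv_pow, ← C_eq_coe_nat]

/-- Case 2 of Proposition `nullsmall`: if a binary nonic `f` satisfies `(f,f)_8 = x²` and
`a₉² = 0`, `a₈² − a₇a₉ = 0`, `3a₇² − 4a₆a₈ + a₅a₉ = 0`, `10a₆² − 15a₅a₇ + 6a₄a₈ − a₃a₉ = 0`,
then `a₅ = a₆ = a₇ = a₈ = a₉ = 0` and `x⁵ ∣ f`. -/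
theorem nonic_case2_nullform (a : ℕ → ℂ)
    (f : MvPolynomial (Fin 2) ℂ)
    (hf : f = ∑ i ∈ Finset.range 10, C ((Nat.choose 9 i : ℂ) * a i) * X 0 ^ (9 - i) * X 1 ^ i)
    (hl : transv 9 9 8 f f = X 0 ^ 2)
    (e1 : a 9 ^ 2 = 0)
    (e2 : a 8 ^ 2 - a 7 * a 9 = 0)
    (e3 : 3 * a 7 ^ 2 - 4 * a 6 * a 8 + a 5 * a 9 = 0)
    (e4 : 10 * a 6 ^ 2 - 15 * a 5 * a 7 + 6 * a 4 * a 8 - a 3 * a 9 = 0) :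
    a 5 = 0 ∧ a 6 = 0 ∧ a 7 = 0 ∧ a 8 = 0 ∧ a 9 = 0 ∧
      (X 0 : MvPolynomial (Fin 2) ℂ) ^ 5 ∣ f := by
  have ha9 : a 9 = 0 := sq_eq_zero_iff.mp e1
  have ha8 : a 8 = 0 := by
    have h : a 8 ^ 2 = 0 := by linear_combination e2 + a 7 * ha9
    exact sq_eq_zero_iff.mp h
  have ha7 : a 7 = 0 := by
    have h : a 7 ^ 2 = 0 := by
      linear_combination e3 / 3 + (4 / 3 * a 6) * ha8 - (a 5 / 3) * ha9
    exact sq_eq_zero_iff.mp h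
  have ha6 : a 6 = 0 := by
    have h : a 6 ^ 2 = 0 := by
      linear_combination e4 / 10 + (3 / 2 * a 5) * ha7 - (3 / 5 * a 4) * ha8 + (a 3 / 10) * ha9
    exact sq_eq_zero_iff.mp h
  have hf' : f = C (a 0) * X 0 ^ 9 + C (9 * a 1) * X 0 ^ 8 * X 1
      + C (36 * a 2) * X 0 ^ 7 * X 1 ^ 2 + C (84 * a 3) * X 0 ^ 6 * X 1 ^ 3
      + C (126 * a 4) * X 0 ^ 5 * X 1 ^ 4 + C (126 * a 5) * X 0 ^ 4 * X 1 ^ 5 := by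
    rw [hf]
    norm_num [Finset.sum_range_succ, ha6, ha7, ha8, ha9,
      show Nat.choose 9 5 = 126 from rfl, show Nat.choose 9 4 = 126 from rfl,
      show Nat.choose 9 3 = 84 from rfl, show Nat.choose 9 2 = 36 from rfl]
    try simp only [C_mul, map_ofNat]
    try ring
  have h10 : pderiv (1 : Fin 2) (X 0 : MvPolynomial (Fin 2) ℂ) = 0 := pderiv_X_of_ne (by decide)
  have h01 : pderiv (0 : Fin 2) (X 1 : MvPolynomial (Fin 2) ℂ) = 0 := pderiv_X_of_ne (by decide)
  have D0 : dxy 0 8 f = 0 := by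
    rw [hf']
    norm_num only [dxy, Function.iterate_succ_apply', Function.iterate_zero, id_eq,
      pderiv_mul, pderiv_X_pow', pderiv_X_self, h10, h01, pderiv_C,
      mul_zero, zero_mul, add_zero, zero_add, mul_one, one_mul, map_add, pow_zero, pow_one, map_zero]
    try simp only [C_mul, map_ofNat]
    try ring
  have D1 : dxy 1 7 f = 0 := by
    rw [hf']
    norm_num only [dxy, Function.iterate_succ_apply', Function.iterate_zero, id_eq,
      pderiv_mul, pderiv_X_pow', pderiv_X_self, h10, h01, pderiv_C,
      mul_zero, zero_mul, add_zero, zero_add, mul_one, one_mul, map_add, pow_zero, pow_one, map_zero]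
    try simp only [C_mul, map_ofNat]
    try ring
  have D2 : dxy 2 6 f = 0 := by
    rw [hf']
    norm_num only [dxy, Function.iterate_succ_apply', Function.iterate_zero, id_eq,
      pderiv_mul, pderiv_X_pow', pderiv_X_self, h10, h01, pderiv_C,
      mul_zero, zero_mul, add_zero, zero_add, mul_one, one_mul, map_add, pow_zero, pow_one, map_zero]
    try simp only [C_mul, map_ofNat]
    try ring
  have D3 : dxy 3 5 f = C (362880 * a 5) * X 0 := by
    rw [hf']
    norm_num only [dxy, Function.iterate_succ_apply', Function.iterate_zero, id_eq,
      pderiv_mul, pderiv_X_pow', pderiv_X_self, h10, h01, pderiv_C,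
      mul_zero, zero_mul, add_zero, zero_add, mul_one, one_mul, map_add, pow_zero, pow_one, map_zero]
    try simp only [C_mul, map_ofNat]
    try ring
  have D4 : dxy 4 4 f = C (362880 * a 4) * X 0 + C (362880 * a 5) * X 1 := by
    rw [hf']
    norm_num only [dxy, Function.iterate_succ_apply', Function.iterate_zero, id_eq,
      pderiv_mul, pderiv_X_pow', pderiv_X_self, h10, h01, pderiv_C,
      mul_zero, zero_mul, add_zero, zero_add, mul_one, one_mul, map_add, pow_zero, pow_one, map_zero]
    try simp only [C_mul, map_ofNat]
    try ring
  have D5 : dxy 5 3 f = C (362880 * a 3) * X 0 + C (362880 * a 4) * X 1 := by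
    rw [hf']
    norm_num only [dxy, Function.iterate_succ_apply', Function.iterate_zero, id_eq,
      pderiv_mul, pderiv_X_pow', pderiv_X_self, h10, h01, pderiv_C,
      mul_zero, zero_mul, add_zero, zero_add, mul_one, one_mul, map_add, pow_zero, pow_one, map_zero]
    try simp only [C_mul, map_ofNat]
    try ring
  have D6 : dxy 6 2 f = C (362880 * a 2) * X 0 + C (362880 * a 3) * X 1 := by
    rw [hf']
    norm_num only [dxy, Function.iterate_succ_apply', Function.iterate_zero, id_eq,
      pderiv_mul, pderiv_X_pow', pderiv_X_self, h10, h01, pderiv_C,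
      mul_zero, zero_mul, add_zero, zero_add, mul_one, one_mul, map_add, pow_zero, pow_one, map_zero]
    try simp only [C_mul, map_ofNat]
    try ring
  have D7 : dxy 7 1 f = C (362880 * a 1) * X 0 + C (362880 * a 2) * X 1 := by
    rw [hf']
    norm_num only [dxy, Function.iterate_succ_apply', Function.iterate_zero, id_eq,
      pderiv_mul, pderiv_X_pow', pderiv_X_self, h10, h01, pderiv_C,
      mul_zero, zero_mul, add_zero, zero_add, mul_one, one_mul, map_add, pow_zero, pow_one, map_zero]
    try simp only [C_mul, map_ofNat]
    try ring
  have D8 : dxy 8 0 f = C (362880 * a 0) * X 0 + C (362880 * a 1) * X 1 := by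
    rw [hf']
    norm_num only [dxy, Function.iterate_succ_apply', Function.iterate_zero, id_eq,
      pderiv_mul, pderiv_X_pow', pderiv_X_self, h10, h01, pderiv_C,
      mul_zero, zero_mul, add_zero, zero_add, mul_one, one_mul, map_add, pow_zero, pow_one, map_zero]
    try simp only [C_mul, map_ofNat]
    try ring
  have hne : ((1 : Fin 2) = 0) = False := by simp
  have key := congrArg (MvPolynomial.eval (fun j : Fin 2 => if j = 0 then (0 : ℂ) else 1)) hl
  rw [transv] at key
  norm_num only [Finset.sum_range_succ, Finset.sum_range_zero] at key
  rw [D0, D1, D2, D3, D4, D5, D6, D7, D8] at key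
  norm_num only [smul_eval, eval_add, eval_mul, eval_pow, eval_C, eval_X, smul_eq_mul,
    mul_zero, zero_mul, add_zero, zero_add, mul_one, one_mul,
    show Nat.factorial 9 = 362880 from rfl, show Nat.factorial 1 = 1 from rfl,
    show Nat.choose 8 0 = 1 from rfl, show Nat.choose 8 1 = 8 from rfl,
    show Nat.choose 8 2 = 28 from rfl, show Nat.choose 8 3 = 56 from rfl,
    show Nat.choose 8 4 = 70 from rfl, show Nat.choose 8 5 = 56 from rfl,
    show Nat.choose 8 6 = 28 from rfl, show Nat.choose 8 7 = 8 from rfl,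
    show Nat.choose 8 8 = 1 from rfl, map_zero, hne, if_true, if_false] at key
  have ha5 : a 5 = 0 := by
    have h : a 5 ^ 2 = 0 := by linear_combination key / 70
    exact sq_eq_zero_iff.mp h
  refine ⟨ha5, ha6, ha7, ha8, ha9, ?_⟩
  refine ⟨C (a 0) * X 0 ^ 4 + C (9 * a 1) * X 0 ^ 3 * X 1
      + C (36 * a 2) * X 0 ^ 2 * X 1 ^ 2 + C (84 * a 3) * X 0 * X 1 ^ 3
      + C (126 * a 4) * X 1 ^ 4, ?_⟩
  rw [hf', ha5]
  simp only [mul_zero, map_zero, zero_mul, add_zero]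
  ring
end

section
/- Let a_6, a_7 ∈ ℂ with a_7 ≠ 0, and define a_5 = 2a_6²/(3a_7), a_4 = 10a_6³/(27a_7²), a_3 = 5a_6⁴/(27a_7³), a_2 = 7a_6⁵/(81a_7⁴), a_1 = 28a_6⁶/(729a_7⁵), a_0 = 4a_6⁷/(243a_7⁶). Let f = ∑_{i=0}^7 C(9,i) a_i x^{9−i} y^i (with a_8 = a_9 = 0). Then the sixth transvectant q = (f,f)_6 vanishes identically. -/
open MvPolynomial

lemma iter_pd_add (i : Fin 2) (k : ℕ) (p q : MvPolynomial (Fin 2) ℂ) :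
    (⇑(pderiv i))^[k] (p + q) = (⇑(pderiv i))^[k] p + (⇑(pderiv i))^[k] q := by
  induction k with
  | zero => rfl
  | succ n ih => simp [Function.iterate_succ_apply', ih]

lemma iter_pd0 (a m n : ℕ) (c : ℂ) :
    (⇑(pderiv (0 : Fin 2)))^[a] (C c * X 0 ^ m * X 1 ^ n)
      = C (c * (m.descFactorial a : ℕ)) * X 0 ^ (m - a) * X 1 ^ n := by
  induction a with
  | zero => simp
  | succ k ih =>
    rw [Function.iterate_succ_apply', ih]
    have : (Nat.descFactorial m (k+1) : ℂ) = (m - k : ℕ) * (m.descFactorial k : ℕ) := by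
      rw [Nat.descFactorial_succ]; push_cast; ring
    simp [pderiv_mul, pderiv_pow, pderiv_C, this, Nat.sub_sub]
    ring

lemma iter_pd1 (b m n : ℕ) (c : ℂ) :
    (⇑(pderiv (1 : Fin 2)))^[b] (C c * X 0 ^ m * X 1 ^ n)
      = C (c * (n.descFactorial b : ℕ)) * X 0 ^ m * X 1 ^ (n - b) := by
  induction b with
  | zero => simp
  | succ k ih =>
    rw [Function.iterate_succ_apply', ih]
    have : (Nat.descFactorial n (k+1) : ℂ) = (n - k : ℕ) * (n.descFactorial k : ℕ) := by
      rw [Nat.descFactorial_succ]; push_cast; ring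
    simp [pderiv_mul, pderiv_pow, pderiv_C, this, Nat.sub_sub]
    ring

lemma dxy_add (a b : ℕ) (p q : MvPolynomial (Fin 2) ℂ) :
    dxy a b (p + q) = dxy a b p + dxy a b q := by
  simp [dxy, iter_pd_add]

lemma dxy_mono (a b m n : ℕ) (c : ℂ) :
    dxy a b (C c * X 0 ^ m * X 1 ^ n)
      = C (c * (m.descFactorial a : ℕ) * (n.descFactorial b : ℕ)) * X 0 ^ (m - a) * X 1 ^ (n - b) := by
  rw [dxy, iter_pd1, iter_pd0]; simp only [C_mul]
  ring

set_option maxHeartbeats 1600000 in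
/-- With the special coefficient substitutions of Case 1 of the nonic nullform lemma
(and `a₈ = a₉ = 0`), the sixth transvectant `q = (f,f)_6` vanishes identically. -/
theorem nonic_q_vanishes (a6 a7 : ℂ) (ha7 : a7 ≠ 0)
    (a : ℕ → ℂ)
    (h0 : a 0 = 4 * a6 ^ 7 / (243 * a7 ^ 6))
    (h1 : a 1 = 28 * a6 ^ 6 / (729 * a7 ^ 5))
    (h2 : a 2 = 7 * a6 ^ 5 / (81 * a7 ^ 4))
    (h3 : a 3 = 5 * a6 ^ 4 / (27 * a7 ^ 3))
    (h4 : a 4 = 10 * a6 ^ 3 / (27 * a7 ^ 2))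
    (h5 : a 5 = 2 * a6 ^ 2 / (3 * a7))
    (h6 : a 6 = a6) (h7 : a 7 = a7) (h8 : a 8 = 0) (h9 : a 9 = 0)
    (f : MvPolynomial (Fin 2) ℂ)
    (hf : f = ∑ i ∈ Finset.range 10, C ((Nat.choose 9 i : ℂ) * a i) * X 0 ^ (9 - i) * X 1 ^ i) :
    transv 9 9 6 f f = 0 := by
  set t : ℂ := a6 / (3 * a7) with ht
  have e0 : a 0 = 36 * a7 * t ^ 7 := by rw [h0, ht]; field_simp; ring
  have e1 : a 1 = 28 * a7 * t ^ 6 := by rw [h1, ht]; field_simp; ring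
  have e2 : a 2 = 21 * a7 * t ^ 5 := by rw [h2, ht]; field_simp; ring
  have e3 : a 3 = 15 * a7 * t ^ 4 := by rw [h3, ht]; field_simp; ring
  have e4 : a 4 = 10 * a7 * t ^ 3 := by rw [h4, ht]; field_simp; ring
  have e5 : a 5 = 6 * a7 * t ^ 2 := by rw [h5, ht]; field_simp; ring
  have e6 : a 6 = 3 * a7 * t := by rw [h6, ht]; field_simp
  apply MvPolynomial.funext
  intro v
  have D60 : eval v (dxy 6 0 f) = 2177280 * a7 * t ^ 7 * v 0 ^ 3 + 5080320 * a7 * t ^ 6 * v 0 ^ 2 * v 1 ^ 1 + 3810240 * a7 * t ^ 5 * v 0 ^ 1 * v 1 ^ 2 + 907200 * a7 * t ^ 4 * v 1 ^ 3 := by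
    rw [hf]
    simp only [Finset.sum_range_succ, Finset.sum_range_zero, zero_add, dxy_add, dxy_mono]
    norm_num [Nat.descFactorial, show Nat.choose 9 0 = 1 from rfl, show Nat.choose 9 1 = 9 from rfl, show Nat.choose 9 2 = 36 from rfl, show Nat.choose 9 3 = 84 from rfl, show Nat.choose 9 4 = 126 from rfl, show Nat.choose 9 5 = 126 from rfl, show Nat.choose 9 6 = 84 from rfl, show Nat.choose 9 7 = 36 from rfl, show Nat.choose 9 8 = 9 from rfl, show Nat.choose 9 9 = 1 from rfl, e0, e1, e2, e3, e4, e5, e6, h7, h8, h9]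
    ring
  have D51 : eval v (dxy 5 1 f) = 1693440 * a7 * t ^ 6 * v 0 ^ 3 + 3810240 * a7 * t ^ 5 * v 0 ^ 2 * v 1 ^ 1 + 2721600 * a7 * t ^ 4 * v 0 ^ 1 * v 1 ^ 2 + 604800 * a7 * t ^ 3 * v 1 ^ 3 := by
    rw [hf]
    simp only [Finset.sum_range_succ, Finset.sum_range_zero, zero_add, dxy_add, dxy_mono]
    norm_num [Nat.descFactorial, show Nat.choose 9 0 = 1 from rfl, show Nat.choose 9 1 = 9 from rfl, show Nat.choose 9 2 = 36 from rfl, show Nat.choose 9 3 = 84 from rfl, show Nat.choose 9 4 = 126 from rfl, show Nat.choose 9 5 = 126 from rfl, show Nat.choose 9 6 = 84 from rfl, show Nat.choose 9 7 = 36 from rfl, show Nat.choose 9 8 = 9 from rfl, show Nat.choose 9 9 = 1 from rfl, e0, e1, e2, e3, e4, e5, e6, h7, h8, h9]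
    ring
  have D42 : eval v (dxy 4 2 f) = 1270080 * a7 * t ^ 5 * v 0 ^ 3 + 2721600 * a7 * t ^ 4 * v 0 ^ 2 * v 1 ^ 1 + 1814400 * a7 * t ^ 3 * v 0 ^ 1 * v 1 ^ 2 + 362880 * a7 * t ^ 2 * v 1 ^ 3 := by
    rw [hf]
    simp only [Finset.sum_range_succ, Finset.sum_range_zero, zero_add, dxy_add, dxy_mono]
    norm_num [Nat.descFactorial, show Nat.choose 9 0 = 1 from rfl, show Nat.choose 9 1 = 9 from rfl, show Nat.choose 9 2 = 36 from rfl, show Nat.choose 9 3 = 84 from rfl, show Nat.choose 9 4 = 126 from rfl, show Nat.choose 9 5 = 126 from rfl, show Nat.choose 9 6 = 84 from rfl, show Nat.choose 9 7 = 36 from rfl, show Nat.choose 9 8 = 9 from rfl, show Nat.choose 9 9 = 1 from rfl, e0, e1, e2, e3, e4, e5, e6, h7, h8, h9]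
    ring
  have D33 : eval v (dxy 3 3 f) = 907200 * a7 * t ^ 4 * v 0 ^ 3 + 1814400 * a7 * t ^ 3 * v 0 ^ 2 * v 1 ^ 1 + 1088640 * a7 * t ^ 2 * v 0 ^ 1 * v 1 ^ 2 + 181440 * a7 * t ^ 1 * v 1 ^ 3 := by
    rw [hf]
    simp only [Finset.sum_range_succ, Finset.sum_range_zero, zero_add, dxy_add, dxy_mono]
    norm_num [Nat.descFactorial, show Nat.choose 9 0 = 1 from rfl, show Nat.choose 9 1 = 9 from rfl, show Nat.choose 9 2 = 36 from rfl, show Nat.choose 9 3 = 84 from rfl, show Nat.choose 9 4 = 126 from rfl, show Nat.choose 9 5 = 126 from rfl, show Nat.choose 9 6 = 84 from rfl, show Nat.choose 9 7 = 36 from rfl, show Nat.choose 9 8 = 9 from rfl, show Nat.choose 9 9 = 1 from rfl, e0, e1, e2, e3, e4, e5, e6, h7, h8, h9]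
    ring
  have D24 : eval v (dxy 2 4 f) = 604800 * a7 * t ^ 3 * v 0 ^ 3 + 1088640 * a7 * t ^ 2 * v 0 ^ 2 * v 1 ^ 1 + 544320 * a7 * t ^ 1 * v 0 ^ 1 * v 1 ^ 2 + 60480 * a7 * t ^ 0 * v 1 ^ 3 := by
    rw [hf]
    simp only [Finset.sum_range_succ, Finset.sum_range_zero, zero_add, dxy_add, dxy_mono]
    norm_num [Nat.descFactorial, show Nat.choose 9 0 = 1 from rfl, show Nat.choose 9 1 = 9 from rfl, show Nat.choose 9 2 = 36 from rfl, show Nat.choose 9 3 = 84 from rfl, show Nat.choose 9 4 = 126 from rfl, show Nat.choose 9 5 = 126 from rfl, show Nat.choose 9 6 = 84 from rfl, show Nat.choose 9 7 = 36 from rfl, show Nat.choose 9 8 = 9 from rfl, show Nat.choose 9 9 = 1 from rfl, e0, e1, e2, e3, e4, e5, e6, h7, h8, h9]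
    ring
  have D15 : eval v (dxy 1 5 f) = 362880 * a7 * t ^ 2 * v 0 ^ 3 + 544320 * a7 * t ^ 1 * v 0 ^ 2 * v 1 ^ 1 + 181440 * a7 * t ^ 0 * v 0 ^ 1 * v 1 ^ 2 := by
    rw [hf]
    simp only [Finset.sum_range_succ, Finset.sum_range_zero, zero_add, dxy_add, dxy_mono]
    norm_num [Nat.descFactorial, show Nat.choose 9 0 = 1 from rfl, show Nat.choose 9 1 = 9 from rfl, show Nat.choose 9 2 = 36 from rfl, show Nat.choose 9 3 = 84 from rfl, show Nat.choose 9 4 = 126 from rfl, show Nat.choose 9 5 = 126 from rfl, show Nat.choose 9 6 = 84 from rfl, show Nat.choose 9 7 = 36 from rfl, show Nat.choose 9 8 = 9 from rfl, show Nat.choose 9 9 = 1 from rfl, e0, e1, e2, e3, e4, e5, e6, h7, h8, h9]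
    ring
  have D06 : eval v (dxy 0 6 f) = 181440 * a7 * t ^ 1 * v 0 ^ 3 + 181440 * a7 * t ^ 0 * v 0 ^ 2 * v 1 ^ 1 := by
    rw [hf]
    simp only [Finset.sum_range_succ, Finset.sum_range_zero, zero_add, dxy_add, dxy_mono]
    norm_num [Nat.descFactorial, show Nat.choose 9 0 = 1 from rfl, show Nat.choose 9 1 = 9 from rfl, show Nat.choose 9 2 = 36 from rfl, show Nat.choose 9 3 = 84 from rfl, show Nat.choose 9 4 = 126 from rfl, show Nat.choose 9 5 = 126 from rfl, show Nat.choose 9 6 = 84 from rfl, show Nat.choose 9 7 = 36 from rfl, show Nat.choose 9 8 = 9 from rfl, show Nat.choose 9 9 = 1 from rfl, e0, e1, e2, e3, e4, e5, e6, h7, h8, h9]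
    ring
  norm_num [transv, show Nat.choose 6 0 = 1 from rfl, show Nat.choose 6 1 = 6 from rfl, show Nat.choose 6 2 = 15 from rfl, show Nat.choose 6 3 = 20 from rfl, show Nat.choose 6 4 = 15 from rfl, show Nat.choose 6 5 = 6 from rfl, show Nat.choose 6 6 = 1 from rfl, show Nat.factorial 3 = 6 from rfl, show Nat.factorial 9 = 362880 from rfl, Finset.sum_range_succ, Finset.sum_range_zero, smul_eval, eval_mul,
    D60, D51, D42, D33, D24, D15, D06]
  ring
end

section
/- Let f be a binary nonic with coefficients a_i (f = ∑ C(9,i) a_i x^{9−i} y^i), a_7 = a_8 = 0. Suppose the covariant l = (f,f)_8 vanishes and q = (f,f)_6 = x^5 y. Write c for the coefficient of y² in l and d_i for the coefficient of x^i y^{6−i} in q (so c = 0, d_0 = ... = d_4 = 0, d_5 ≠ 0 (suitably normalized), d_6 = 0). Then the polynomial identity 5 d_5 a_9 = −75 a_4 d_0 + 45 a_5 d_1 − a_6 (9c + 22 d_2) holds in ℤ[a_0,...,a_9], and consequently a_9 = 0; then a_4 = a_5 = a_6 = 0 and d_5 = 0, a contradiction. Hence no binary nonic with a_7 = a_8 =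 0 has l = 0 and q = x^5 y (up to scalar). -/
open MvPolynomial

lemma Cnat (k : ℕ) : (C ((k:ℕ):ℂ) : MvPolynomial (Fin 2) ℂ) = (k : MvPolynomial (Fin 2) ℂ) := by
  simp

lemma step1 (n k : ℕ) : pderiv (1 : Fin 2) ((X 0 : MvPolynomial (Fin 2) ℂ) ^ n * X 1 ^ k) =
    C (k : ℂ) * (X 0 ^ n * X 1 ^ (k - 1)) := by
  rw [pderiv_mul, pderiv_pow, pderiv_pow, pderiv_X_self,
    pderiv_X_of_ne (show (0:Fin 2) ≠ 1 by decide), Cnat]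
  ring

lemma step0 (n k : ℕ) : pderiv (0 : Fin 2) ((X 0 : MvPolynomial (Fin 2) ℂ) ^ n * X 1 ^ k) =
    C (n : ℂ) * (X 0 ^ (n - 1) * X 1 ^ k) := by
  rw [pderiv_mul, pderiv_pow, pderiv_pow, pderiv_X_self,
    pderiv_X_of_ne (show (1:Fin 2) ≠ 0 by decide), Cnat]
  ring

lemma dy_pow (v n m : ℕ) :
    (⇑(pderiv (1 : Fin 2)))^[v] ((X 0 : MvPolynomial (Fin 2) ℂ) ^ n * X 1 ^ m) =
      C (m.descFactorial v : ℂ) * (X 0 ^ n * X 1 ^ (m - v)) := by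
  induction v with
  | zero => simp
  | succ v ih =>
    rw [Function.iterate_succ_apply', ih, pderiv_C_mul, step1, Nat.descFactorial_succ,
      Nat.cast_mul, C_mul, Nat.sub_sub]
    ring

lemma dxy_pow (u v n m : ℕ) :
    dxy u v ((X 0 : MvPolynomial (Fin 2) ℂ) ^ n * X 1 ^ m) =
      C ((n.descFactorial u * m.descFactorial v : ℕ) : ℂ) * (X 0 ^ (n - u) * X 1 ^ (m - v)) := by
  rw [dxy, dy_pow]
  induction u with
  | zero => simp
  | succ u ih =>
    rw [Function.iterate_succ_apply', ih, pderiv_C_mul, step0, Nat.descFactorial_succ]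
    push_cast
    rw [Nat.sub_sub]
    simp only [C_mul]
    ring

lemma fs_eq (α β A B : ℕ) :
    (Finsupp.single (0:Fin 2) α + Finsupp.single 1 β = Finsupp.single (0:Fin 2) A + Finsupp.single 1 B)
      ↔ (α = A ∧ β = B) := by
  constructor
  · intro h
    have h0 := DFunLike.congr_fun h 0
    have h1 := DFunLike.congr_fun h 1
    simp [Finsupp.single_apply] at h0 h1
    exact ⟨h0, h1⟩
  · rintro ⟨rfl, rfl⟩; rfl

lemma coeff_CXX (r : ℂ) (α β A B : ℕ) :
    coeff (Finsupp.single (0:Fin 2) A + Finsupp.single 1 B)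
      (C r * ((X 0 : MvPolynomial (Fin 2) ℂ) ^ α * X 1 ^ β)) =
      if α = A ∧ β = B then r else 0 := by
  rw [X_pow_eq_monomial, X_pow_eq_monomial, monomial_mul, C_mul_monomial,
    mul_one, mul_one, coeff_monomial]
  simp [fs_eq]

lemma mul_CXX (r s : ℂ) (α β γ δ : ℕ) :
    (C r * ((X 0 : MvPolynomial (Fin 2) ℂ) ^ α * X 1 ^ β)) *
      (C s * ((X 0 : MvPolynomial (Fin 2) ℂ) ^ γ * X 1 ^ δ)) =
      C (r * s) * (X 0 ^ (α + γ) * X 1 ^ (β + δ)) := by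
  rw [C_mul, pow_add, pow_add]; ring


lemma iter_pderiv_C_mul (j : Fin 2) (k : ℕ) (r : ℂ) (g : MvPolynomial (Fin 2) ℂ) :
    (⇑(pderiv j))^[k] (C r * g) = C r * (⇑(pderiv j))^[k] g := by
  induction k generalizing g with
  | zero => rfl
  | succ k ih => rw [Function.iterate_succ_apply, pderiv_C_mul, ih, Function.iterate_succ_apply]

lemma iter_pderiv_sum (j : Fin 2) (k : ℕ) (s : Finset ℕ) (g : ℕ → MvPolynomial (Fin 2) ℂ) :
    (⇑(pderiv j))^[k] (∑ i ∈ s, g i) = ∑ i ∈ s, (⇑(pderiv j))^[k] (g i) := by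
  induction k generalizing g with
  | zero => rfl
  | succ k ih =>
    rw [Function.iterate_succ_apply, map_sum, ih]
    exact Finset.sum_congr rfl fun i _ => (Function.iterate_succ_apply _ _ _).symm

lemma dxy_C_mul (u v : ℕ) (r : ℂ) (g : MvPolynomial (Fin 2) ℂ) :
    dxy u v (C r * g) = C r * dxy u v g := by
  rw [dxy, dxy, iter_pderiv_C_mul, iter_pderiv_C_mul]

lemma dxy_sum (u v : ℕ) (s : Finset ℕ) (g : ℕ → MvPolynomial (Fin 2) ℂ) :
    dxy u v (∑ i ∈ s, g i) = ∑ i ∈ s, dxy u v (g i) := by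
  rw [dxy, iter_pderiv_sum, iter_pderiv_sum]; rfl

lemma coeff_prod (a : ℕ → ℂ) (f : MvPolynomial (Fin 2) ℂ)
    (hf : f = ∑ i ∈ Finset.range 10, C ((Nat.choose 9 i : ℂ) * a i) * X 0 ^ (9 - i) * X 1 ^ i)
    (u v u' v' A B : ℕ) :
    coeff (Finsupp.single (0:Fin 2) A + Finsupp.single 1 B) (dxy u v f * dxy u' v' f)
    = ∑ j ∈ Finset.range 10, ∑ k ∈ Finset.range 10,
        if 9-j-u + (9-k-u') = A ∧ (j-v) + (k-v') = B then
          ((Nat.choose 9 j : ℂ) * a j * (((9-j).descFactorial u * j.descFactorial v : ℕ) : ℂ)) *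
          ((Nat.choose 9 k : ℂ) * a k * (((9-k).descFactorial u' * k.descFactorial v' : ℕ) : ℂ))
        else 0 := by
  have hdxyf : ∀ u v : ℕ, dxy u v f = ∑ i ∈ Finset.range 10,
      C ((Nat.choose 9 i : ℂ) * a i * (((9-i).descFactorial u * i.descFactorial v : ℕ) : ℂ)) *
        (X 0 ^ (9-i-u) * X 1 ^ (i-v)) := by
    intro u v
    rw [hf, dxy_sum]
    refine Finset.sum_congr rfl fun i _ => ?_
    rw [mul_assoc, dxy_C_mul, dxy_pow, ← mul_assoc, ← C_mul]
  rw [hdxyf, hdxyf, Finset.sum_mul_sum, coeff_sum]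
  refine Finset.sum_congr rfl fun j _ => ?_
  rw [coeff_sum]
  refine Finset.sum_congr rfl fun k _ => ?_
  rw [mul_CXX, coeff_CXX]

set_option maxHeartbeats 4000000 in
/-- Case 2 of the nonic nullform lemma: for a binary nonic with `a₇ = a₈ = 0`, writing
`c` for the coefficient of `y²` in `l = (f,f)_8` and `dᵢ` for the coefficient of `xⁱy^(6-i)`
in `q = (f,f)_6`, the syzygy `5 d₅ a₉ = −75 a₄ d₀ + 45 a₅ d₁ − a₆(9c + 22 d₂)` holds;
consequently no such nonic has `l = 0` and `q` a nonzero scalar multiple of `x⁵y`. -/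
theorem nonic_case_x5y (a : ℕ → ℂ) (h7 : a 7 = 0) (h8 : a 8 = 0)
    (f l q : MvPolynomial (Fin 2) ℂ)
    (hf : f = ∑ i ∈ Finset.range 10, C ((Nat.choose 9 i : ℂ) * a i) * X 0 ^ (9 - i) * X 1 ^ i)
    (hl : l = transv 9 9 8 f f) (hq : q = transv 9 9 6 f f)
    (c : ℂ) (hc : c = MvPolynomial.coeff (Finsupp.single 1 2) l)
    (d : ℕ → ℂ)
    (hd : ∀ i ≤ 6, d i =
      MvPolynomial.coeff (Finsupp.single (0 : Fin 2) i + Finsupp.single 1 (6 - i)) q) :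
    5 * d 5 * a 9 = -75 * a 4 * d 0 + 45 * a 5 * d 1 - a 6 * (9 * c + 22 * d 2) ∧
      ¬ (l = 0 ∧ ∃ s : ℂ, s ≠ 0 ∧ q = C s * (X 0 ^ 5 * X 1)) := by
  have hM : (Finsupp.single (1 : Fin 2) 2) =
      Finsupp.single (0:Fin 2) 0 + Finsupp.single 1 2 := by simp
  have hcv : c = 70 * a 5 ^ 2 - 112 * a 4 * a 6 + 2 * a 1 * a 9 := by
    rw [hc, hl, hM, transv, coeff_smul, coeff_sum]
    simp only [coeff_smul, coeff_prod a f hf]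
    simp only [Finset.sum_range_succ, Finset.sum_range_zero]
    norm_num [h7, h8, Nat.descFactorial, Nat.factorial, Nat.choose]
    ring_nf
  have hd0 : d 0 = -20 * a 6 ^ 2 + 2 * a 3 * a 9 := by
    rw [hd 0 (by norm_num), hq, transv, coeff_smul, coeff_sum]
    simp only [coeff_smul, coeff_prod a f hf]
    simp only [Finset.sum_range_succ, Finset.sum_range_zero]
    norm_num [h7, h8, Nat.descFactorial, Nat.factorial, Nat.choose]
    ring_nf
  have hd1 : d 1 = -30 * a 5 * a 6 + 6 * a 2 * a 9 := by
    rw [hd 1 (by norm_num), hq, transv, coeff_smul, coeff_sum]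
    simp only [coeff_smul, coeff_prod a f hf]
    simp only [Finset.sum_range_succ, Finset.sum_range_zero]
    norm_num [h7, h8, Nat.descFactorial, Nat.factorial, Nat.choose]
    ring_nf
  have hd2 : d 2 = -90 * a 5 ^ 2 + 114 * a 4 * a 6 + 6 * a 1 * a 9 := by
    rw [hd 2 (by norm_num), hq, transv, coeff_smul, coeff_sum]
    simp only [coeff_smul, coeff_prod a f hf]
    simp only [Finset.sum_range_succ, Finset.sum_range_zero]
    norm_num [h7, h8, Nat.descFactorial, Nat.factorial, Nat.choose]
    ring_nf
  have hd4 : d 4 = -90 * a 4 ^ 2 + 114 * a 3 * a 5 - 12 * a 2 * a 6 := by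
    rw [hd 4 (by norm_num), hq, transv, coeff_smul, coeff_sum]
    simp only [coeff_smul, coeff_prod a f hf]
    simp only [Finset.sum_range_succ, Finset.sum_range_zero]
    norm_num [h7, h8, Nat.descFactorial, Nat.factorial, Nat.choose]
    ring_nf
  have hd5 : d 5 = -30 * a 3 * a 4 + 54 * a 2 * a 5 - 30 * a 1 * a 6 := by
    rw [hd 5 (by norm_num), hq, transv, coeff_smul, coeff_sum]
    simp only [coeff_smul, coeff_prod a f hf]
    simp only [Finset.sum_range_succ, Finset.sum_range_zero]
    norm_num [h7, h8, Nat.descFactorial, Nat.factorial, Nat.choose]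
    ring_nf
  have syz : 5 * d 5 * a 9 = -75 * a 4 * d 0 + 45 * a 5 * d 1 - a 6 * (9 * c + 22 * d 2) := by
    rw [hcv, hd0, hd1, hd2, hd5]; ring
  refine ⟨syz, ?_⟩
  rintro ⟨hl0, s, hs, hqs⟩
  have hX1 : (X 1 : MvPolynomial (Fin 2) ℂ) = X 1 ^ 1 := (pow_one _).symm
  have hc0 : c = 0 := by rw [hc, hl0, coeff_zero]
  have hdv : ∀ i ≤ 6, d i = if 5 = i ∧ 1 = 6 - i then s else 0 := by
    intro i hi
    rw [hd i hi, hqs, hX1, coeff_CXX]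
  have hd0' : d 0 = 0 := by rw [hdv 0 (by norm_num)]; norm_num
  have hd1' : d 1 = 0 := by rw [hdv 1 (by norm_num)]; norm_num
  have hd2' : d 2 = 0 := by rw [hdv 2 (by norm_num)]; norm_num
  have hd4' : d 4 = 0 := by rw [hdv 4 (by norm_num)]; norm_num
  have hd5' : d 5 = s := by rw [hdv 5 (by norm_num)]; norm_num
  have ha9 : a 9 = 0 := by
    have h0 : 5 * s * a 9 = 0 := by
      rw [← hd5', syz, hd0', hd1', hd2', hc0]; ring
    rcases mul_eq_zero.1 h0 with h | h
    · rcases mul_eq_zero.1 h with h' | h'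
      · norm_num at h'
      · exact absurd h' hs
    · exact h
  have ha6 : a 6 = 0 := by
    have h : (20:ℂ) * a 6 ^ 2 = 0 := by
      rw [hd0', ha9] at hd0; linear_combination hd0
    have h2 : a 6 ^ 2 = 0 := (mul_eq_zero.1 h).resolve_left (by norm_num)
    exact pow_eq_zero_iff (two_ne_zero) |>.1 h2
  have ha5 : a 5 = 0 := by
    have h : (70:ℂ) * a 5 ^ 2 = 0 := by
      rw [hc0, ha9, ha6] at hcv; linear_combination -hcv
    have h2 : a 5 ^ 2 = 0 := (mul_eq_zero.1 h).resolve_left (by norm_num)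
    exact pow_eq_zero_iff (two_ne_zero) |>.1 h2
  have ha4 : a 4 = 0 := by
    have h : (90:ℂ) * a 4 ^ 2 = 0 := by
      rw [hd4', ha5, ha6] at hd4; linear_combination hd4
    have h2 : a 4 ^ 2 = 0 := (mul_eq_zero.1 h).resolve_left (by norm_num)
    exact pow_eq_zero_iff (two_ne_zero) |>.1 h2
  apply hs
  rw [← hd5', hd5, ha4, ha5, ha6]; ring
end
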